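/- If A and B are left ω-narrow subsets of a topological group X, then the pointwise product AB = {ab : a ∈ A, b ∈ B} is a left ω-narrow subset of X. -/

import Mathlib

open Pointwise

/-- A subset `A` of a topological group `X` is left ω-narrow if for each neighborhood `U`
of the identity there is a countable `C ⊆ X` with `A ⊆ ⋃ c ∈ C, c • U`. -/
def LeftOmegaNarrow {X : Type*} [Group X] [TopologicalSpace X] (A : Set X) : Prop :=
  ∀ U ∈ nhds (1 : X), ∃ C : Set X, C.Countable ∧ A ⊆ ⋃ c ∈ C, (fun u => c * u) '' U

theorem leftOmegaNarrow_mul {X : Type*} [Group X] [TopologicalSpace X] [IsTopologicalGroup X]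
    (A B : Set X) (hA : LeftOmegaNarrow A) (hB : LeftOmegaNarrow B) :
    LeftOmegaNarrow (A * B) := by
  intro U hU
  obtain ⟨V, hVopen, hV1, hVV⟩ := exists_open_nhds_one_mul_subset hU
  have hVnhds : V ∈ nhds (1 : X) := hVopen.mem_nhds hV1
  obtain ⟨D, hDc, hDB⟩ := hB V hVnhds
  -- for each d, the conjugated neighborhood
  have hW : ∀ d : X, (fun x => d⁻¹ * x * d) ⁻¹' V ∈ nhds (1 : X) := by
    intro d
    have hcont : Continuous (fun x : X => d⁻¹ * x * d) := by continuity
    have h1 : d⁻¹ * (1:X) * d = 1 := by group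
    have := hcont.continuousAt (x := (1 : X))
    rw [ContinuousAt, h1] at this
    exact this hVnhds
  choose C hCc hCA using fun d => hA _ (hW d)
  refine ⟨⋃ d ∈ D, (fun c => c * d) '' C d, hDc.biUnion (fun d _ => ((hCc d).image _)), ?_⟩
  rintro x ⟨a, ha, b, hb, rfl⟩
  obtain ⟨d, hd, hbd⟩ := Set.mem_iUnion₂.mp (hDB hb)
  obtain ⟨c, hc, had⟩ := Set.mem_iUnion₂.mp (hCA d ha)
  obtain ⟨v, hv, rfl⟩ := hbd
  obtain ⟨w, hw2, rfl⟩ := had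
  refine Set.mem_iUnion₂.mpr ⟨c * d, Set.mem_iUnion₂.mpr ⟨d, hd, ⟨c, hc, rfl⟩⟩,
    (d⁻¹ * w * d) * v, hVV ⟨_, hw2, _, hv, rfl⟩, ?_⟩
  group
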